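/- Let q be an odd prime power with characteristic p. If {x_k}_{k∈[n]} in 𝔽_{q²}^d is an (a,c₁,c₂)-projective 2-design with c₂ ≠ 0, then for every matrix A ∈ 𝔽_{q²}^{d×d}, A = (2/c₂) Σ_{k∈[n]} x_k x_k^* A x_k x_k^* − tr(A)·I_d. -/

import Mathlib

open Matrix Kronecker BigOperators

/-- The Hermitian form `⟨u, v⟩ = ∑ᵢ uᵢ^q vᵢ`, with conjugation the Frobenius `a ↦ a^q`. -/
def hermForm {F : Type*} [Field F] {ι : Type*} [Fintype ι] (q : ℕ) (u v : ι → F) : F :=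
  ∑ i, (u i) ^ q * v i

/-- The rank-one matrix `x x^*`, with conjugation `a ↦ a^q`. -/
def rankOne {F : Type*} [Field F] {d : ℕ} (q : ℕ) (x : Fin d → F) :
    Matrix (Fin d) (Fin d) F :=
  vecMulVec x (fun i => (x i) ^ q)

/-- The tensor square `x ⊗ x`. -/
def tensorSq {F : Type*} [Field F] {d : ℕ} (x : Fin d → F) : Fin d × Fin d → F :=
  fun p => x p.1 * x p.2

/-- The matrix `Π_d^{(2)} = ½ ∑ᵢⱼ (eᵢeᵢ^* ⊗ eⱼeⱼ^* + eᵢeⱼ^* ⊗ eⱼeᵢ^*)`. -/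
noncomputable def symProj (F : Type*) [Field F] (d : ℕ) :
    Matrix (Fin d × Fin d) (Fin d × Fin d) F :=
  (2 : F)⁻¹ • ∑ i : Fin d, ∑ j : Fin d,
    (Matrix.single i i (1 : F) ⊗ₖ Matrix.single j j (1 : F)
      + Matrix.single i j (1 : F) ⊗ₖ Matrix.single j i (1 : F))

/-- `{xₖ}` is an `(a, c₁, c₂)`-projective 2-design for `𝔽_{q²}^d` (with `a, c₁, c₂`
in the subfield `𝔽_q`, i.e. fixed by the Frobenius). -/
noncomputable def IsProj2Design {F : Type*} [Field F] (q d n : ℕ)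
    (x : Fin n → Fin d → F) (a c₁ c₂ : F) : Prop :=
  a ^ q = a ∧ c₁ ^ q = c₁ ∧ c₂ ^ q = c₂ ∧
  (∀ k, hermForm q (x k) (x k) = a) ∧
  (∑ k, rankOne q (x k)) = c₁ • (1 : Matrix (Fin d) (Fin d) F) ∧
  (∑ k, vecMulVec (tensorSq (x k)) (fun p => (tensorSq (x k) p) ^ q))
    = c₂ • symProj F d

/-- Lemma 3.8: if `{xₖ}` is an `(a,c₁,c₂)`-projective 2-design with `c₂ ≠ 0`, then
`A = (2/c₂) ∑ₖ xₖxₖ^* A xₖxₖ^* − tr(A)·I` for every `A`. -/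
lemma symProj_apply {F : Type*} [Field F] {d : ℕ} (r m l s : Fin d) :
    symProj F d (r, m) (l, s) = (2 : F)⁻¹ *
      ((if r = l then (1:F) else 0) * (if m = s then 1 else 0)
        + (if r = s then (1:F) else 0) * (if m = l then 1 else 0)) := by
  simp only [symProj, Matrix.smul_apply, Matrix.sum_apply, Matrix.add_apply,
    Matrix.kroneckerMap_apply, Matrix.single, Matrix.of_apply, smul_eq_mul]
  congr 1
  simp [ite_and, Finset.sum_add_distrib, mul_ite, ite_mul, Finset.sum_ite_eq,
    Finset.sum_ite_eq', eq_comm]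
  by_cases h : r = s <;> simp [h]

theorem design_decomposition_of_matrices
    (q p k d n : ℕ) (hp : p.Prime) (hq : q = p ^ k) (hodd : Odd q)
    (F : Type*) [Field F] [Fintype F] (hcard : Fintype.card F = q ^ 2)
    (x : Fin n → Fin d → F) (a c₁ c₂ : F)
    (hdesign : IsProj2Design q d n x a c₁ c₂) (hc₂ : c₂ ≠ 0)
    (A : Matrix (Fin d) (Fin d) F) :
    A = (2 / c₂) • (∑ j, rankOne q (x j) * A * rankOne q (x j))
          - A.trace • (1 : Matrix (Fin d) (Fin d) F) := by
  -- char F ≠ 2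
  have h2 : (2 : F) ≠ 0 := by
    intro h
    have hdvd : ringChar F ∣ 2 := by
      have := (CharP.cast_eq_zero_iff F (ringChar F) 2).mp (by exact_mod_cast h)
      exact this
    have hne1 : ringChar F ≠ 1 := CharP.ringChar_ne_one
    have hchar : ringChar F = 2 := by
      rcases (Nat.prime_two).eq_one_or_self_of_dvd _ hdvd with h1 | h1 <;> omega
    have heven : Fintype.card F % 2 = 0 := FiniteField.even_card_iff_char_two.mp hchar
    have hoddcard : Odd (Fintype.card F) := by
      rw [hcard]; exact hodd.pow
    rw [Nat.odd_iff] at hoddcard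
    omega
  have h6 := hdesign.2.2.2.2.2
  have key : ∀ r s l m : Fin d,
      (∑ kk, x kk r * x kk m * ((x kk l) ^ q * (x kk s) ^ q))
        = c₂ * ((2 : F)⁻¹ *
          ((if r = l then (1:F) else 0) * (if m = s then 1 else 0)
            + (if r = s then (1:F) else 0) * (if m = l then 1 else 0))) := by
    intro r s l m
    have h := congrFun (congrFun h6 (r, m)) (l, s)
    simp only [Matrix.sum_apply, vecMulVec_apply, tensorSq, mul_pow,
      Matrix.smul_apply, smul_eq_mul, symProj_apply] at h
    exact h
  ext r s
  simp only [Matrix.sub_apply, Matrix.smul_apply, Matrix.sum_apply, Matrix.mul_apply,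
    rankOne, vecMulVec_apply, Matrix.one_apply, Matrix.trace, Matrix.diag,
    smul_eq_mul]
  have hT : (∑ kk, ∑ m, (∑ l, x kk r * (x kk l) ^ q * A l m) * (x kk m * (x kk s) ^ q))
      = ∑ l, ∑ m, A l m * (∑ kk, x kk r * x kk m * ((x kk l) ^ q * (x kk s) ^ q)) := by
    calc (∑ kk, ∑ m, (∑ l, x kk r * (x kk l) ^ q * A l m) * (x kk m * (x kk s) ^ q))
        = ∑ kk, ∑ m, ∑ l, (x kk r * (x kk l) ^ q * A l m) * (x kk m * (x kk s) ^ q) := by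
          simp [Finset.sum_mul]
      _ = ∑ kk, ∑ l, ∑ m, (x kk r * (x kk l) ^ q * A l m) * (x kk m * (x kk s) ^ q) := by
          exact Finset.sum_congr rfl fun _ _ => Finset.sum_comm
      _ = ∑ l, ∑ kk, ∑ m, (x kk r * (x kk l) ^ q * A l m) * (x kk m * (x kk s) ^ q) :=
          Finset.sum_comm
      _ = ∑ l, ∑ m, ∑ kk, (x kk r * (x kk l) ^ q * A l m) * (x kk m * (x kk s) ^ q) := by
          exact Finset.sum_congr rfl fun _ _ => Finset.sum_comm
      _ = ∑ l, ∑ m, ∑ kk, A l m * (x kk r * x kk m * ((x kk l) ^ q * (x kk s) ^ q)) := by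
          refine Finset.sum_congr rfl fun _ _ => Finset.sum_congr rfl fun _ _ =>
            Finset.sum_congr rfl fun _ _ => by ring
      _ = ∑ l, ∑ m, A l m * (∑ kk, x kk r * x kk m * ((x kk l) ^ q * (x kk s) ^ q)) := by
          simp [Finset.mul_sum]
  rw [hT]
  simp only [key]
  have hS : (∑ l, ∑ m, A l m * (c₂ * ((2 : F)⁻¹ *
      ((if r = l then (1:F) else 0) * (if m = s then 1 else 0)
        + (if r = s then (1:F) else 0) * (if m = l then 1 else 0)))))
      = c₂ * (2 : F)⁻¹ * (A r s + (if r = s then (1:F) else 0) * ∑ i, A i i) := by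
    by_cases hrs : r = s
    · subst hrs
      simp only [if_pos rfl, one_mul, mul_add, mul_one, mul_zero, mul_ite, ite_mul,
        zero_mul, Finset.sum_add_distrib, Finset.sum_ite_eq, Finset.sum_ite_eq',
        Finset.mul_sum, Finset.mem_univ, if_true]
      congr 1
      · ring
      · exact Finset.sum_congr rfl fun l _ => by ring
    · simp only [if_neg hrs, zero_mul, mul_zero, add_zero, zero_add]
      calc (∑ l, ∑ m, A l m * (c₂ * ((2:F)⁻¹ *
            ((if r = l then (1:F) else 0) * (if m = s then 1 else 0)))))
          = ∑ l, ∑ m, (if l = r then (if m = s then A l m * (c₂ * (2:F)⁻¹) else 0) else 0) := by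
            refine Finset.sum_congr rfl fun l _ => Finset.sum_congr rfl fun m _ => ?_
            by_cases h1 : r = l <;> by_cases h2 : m = s <;>
              simp [h1, h2, eq_comm] <;> ring
        _ = c₂ * (2:F)⁻¹ * A r s := by
            simp [Finset.sum_ite_eq, Finset.sum_ite_eq']
            ring
  rw [hS]
  by_cases hrs : r = s <;> simp [hrs] <;> field_simp <;> ring
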